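/- Let n ≥ 1, m = 2n, and let C ∈ ℂ^{2n×4n} be a normalized system of boundary conditions of rank 2n that is dissipative. Suppose that for some j ∈ {0, 1, …, 2n−1} exactly one row of C has order j and exactly one row has order 2n−1−j; let (b₀, b₁) be the leading pair of the row of order j and (c₀, c₁) the leading pair of the row of order 2n−1−j. Then b₀·conj(c₀) = b₁·conj(c₁). -/

import Mathlib

open ComplexOrder

/-- A system of boundary conditions of order `2n` is a matrix `C ∈ ℂ^{2n×4n}`; we index
the `4n` columns by `Fin (2n) ⊕ Fin (2n)`: `Sum.inl k` is the coefficient of `y^{(k)}(0)`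
and `Sum.inr k` that of `y^{(k)}(1)`.  The order of row `j` is the largest `k` with
`(C_{j,k}, C_{j,2n+k}) ≠ (0,0)`. -/
noncomputable def rowOrder {m : ℕ} (C : Matrix (Fin m) (Fin m ⊕ Fin m) ℂ) (j : Fin m) : ℕ :=
  sSup {k : ℕ | ∃ h : k < m, C j (Sum.inl ⟨k, h⟩) ≠ 0 ∨ C j (Sum.inr ⟨k, h⟩) ≠ 0}

/-- The leading pair `(α_j, β_j) = (C_{j,k_j}, C_{j,m+k_j})` of row `j`. -/
noncomputable def leadingPair {m : ℕ} (C : Matrix (Fin m) (Fin m ⊕ Fin m) ℂ) (j : Fin m) :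
    ℂ × ℂ :=
  if h : rowOrder C j < m then
    (C j (Sum.inl ⟨rowOrder C j, h⟩), C j (Sum.inr ⟨rowOrder C j, h⟩))
  else 0

/-- The system `C` is normalized if, for every value `k`, the leading pairs of the rows
of order `k` are linearly independent in `ℂ²`. -/
def IsNormalized {m : ℕ} (C : Matrix (Fin m) (Fin m ⊕ Fin m) ℂ) : Prop :=
  ∀ k : ℕ, LinearIndependent ℂ (fun j : {j : Fin m // rowOrder C j = k} => leadingPair C j.1)

/-- The quadratic form `q_J(u) = i·(−1)^{n+1} · Σ_{p=0}^{2n−1} (−1)^{p+1} u_p·conj(u_{2n−1−p})`. -/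
noncomputable def qJ (n : ℕ) (u : Fin (2 * n) → ℂ) : ℂ :=
  Complex.I * (-1 : ℂ) ^ (n + 1) *
    ∑ p : Fin (2 * n), (-1 : ℂ) ^ ((p : ℕ) + 1) * u p * (starRingEnd ℂ) (u p.rev)

/-- The system `C` is dissipative if `q_J(v) − q_J(u) ≥ 0` for every `(u,v)` satisfying
`Σ_k C_{j,k}u_k + C_{j,2n+k}v_k = 0` for all rows `j` (dissipativity of the operator
generated by `l₀(y) = (−i)^{2n}y^{(2n)}` and these boundary conditions). -/
def IsDissipativeBC (n : ℕ) (C : Matrix (Fin (2 * n)) (Fin (2 * n) ⊕ Fin (2 * n)) ℂ) : Prop :=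
  ∀ u v : Fin (2 * n) → ℂ,
    (∀ j, ∑ k, (C j (Sum.inl k) * u k + C j (Sum.inr k) * v k) = 0) →
    0 ≤ qJ n v - qJ n u

namespace Stmt16Aux

lemma rowOrder_lt {m : ℕ} (hm : 0 < m) (C : Matrix (Fin m) (Fin m ⊕ Fin m) ℂ) (r : Fin m) :
    rowOrder C r < m := by
  unfold rowOrder
  set S := {k : ℕ | ∃ h : k < m, C r (Sum.inl ⟨k, h⟩) ≠ 0 ∨ C r (Sum.inr ⟨k, h⟩) ≠ 0} with hS
  rcases Set.eq_empty_or_nonempty S with h | h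
  · rw [h, csSup_empty]; exact hm
  · have hbdd : BddAbove S := by
      refine ⟨m, fun k hk => ?_⟩
      obtain ⟨hk', -⟩ := hk
      exact hk'.le
    obtain ⟨hlt, -⟩ := Nat.sSup_mem h hbdd
    exact hlt

lemma entry_eq_zero_of_lt {m : ℕ} (C : Matrix (Fin m) (Fin m ⊕ Fin m) ℂ) (r : Fin m)
    {k : ℕ} (h : k < m) (hk : rowOrder C r < k) :
    C r (Sum.inl ⟨k, h⟩) = 0 ∧ C r (Sum.inr ⟨k, h⟩) = 0 := by
  by_contra hcon
  have hmem : k ∈ {k : ℕ | ∃ h : k < m, C r (Sum.inl ⟨k, h⟩) ≠ 0 ∨ C r (Sum.inr ⟨k, h⟩) ≠ 0} :=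
    ⟨h, by tauto⟩
  have hbdd : BddAbove {k : ℕ | ∃ h : k < m,
      C r (Sum.inl ⟨k, h⟩) ≠ 0 ∨ C r (Sum.inr ⟨k, h⟩) ≠ 0} := by
    refine ⟨m, fun k hk => ?_⟩
    obtain ⟨hk', -⟩ := hk
    exact hk'.le
  have := le_csSup hbdd hmem
  rw [show sSup {k : ℕ | ∃ h : k < m,
      C r (Sum.inl ⟨k, h⟩) ≠ 0 ∨ C r (Sum.inr ⟨k, h⟩) ≠ 0} = rowOrder C r from rfl] at this
  omega

lemma leadingPair_eq_of {m : ℕ} (C : Matrix (Fin m) (Fin m ⊕ Fin m) ℂ) {r : Fin m} {k : ℕ}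
    (hr : rowOrder C r = k) (hk : k < m) :
    leadingPair C r = (C r (Sum.inl ⟨k, hk⟩), C r (Sum.inr ⟨k, hk⟩)) := by
  subst hr
  simp [leadingPair, hk]

lemma row_eq_of_card_one {m : ℕ} {C : Matrix (Fin m) (Fin m ⊕ Fin m) ℂ} {k : ℕ}
    (h : (Finset.univ.filter fun r : Fin m => rowOrder C r = k).card = 1)
    {r r' : Fin m} (hr : rowOrder C r = k) (hr' : rowOrder C r' = k) : r = r' := by
  obtain ⟨x, hx⟩ := Finset.card_eq_one.mp h
  have h1 : r ∈ Finset.univ.filter fun r : Fin m => rowOrder C r = k :=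
    Finset.mem_filter.mpr ⟨Finset.mem_univ _, hr⟩
  have h2 : r' ∈ Finset.univ.filter fun r : Fin m => rowOrder C r = k :=
    Finset.mem_filter.mpr ⟨Finset.mem_univ _, hr'⟩
  rw [hx, Finset.mem_singleton] at h1 h2
  rw [h1, h2]

/-- The scaled boundary system. -/
noncomputable def scaledBC {m : ℕ} (C : Matrix (Fin m) (Fin m ⊕ Fin m) ℂ) (τ : ℂ) :
    Matrix (Fin m) (Fin m ⊕ Fin m) ℂ :=
  Matrix.of fun r col => τ ^ (rowOrder C r - Sum.elim Fin.val Fin.val col) * C r col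

lemma scaledBC_zero_apply {m : ℕ} (C : Matrix (Fin m) (Fin m ⊕ Fin m) ℂ) (r : Fin m)
    (col : Fin m ⊕ Fin m) :
    scaledBC C 0 r col =
      if Sum.elim Fin.val Fin.val col = rowOrder C r then C r col else 0 := by
  rcases lt_trichotomy (Sum.elim Fin.val Fin.val col) (rowOrder C r) with h | h | h
  · rw [if_neg h.ne]
    simp only [scaledBC, Matrix.of_apply]
    rw [zero_pow (by omega), zero_mul]
  · rw [if_pos h]
    simp only [scaledBC, Matrix.of_apply]
    rw [show rowOrder C r - Sum.elim Fin.val Fin.val col = 0 by omega, pow_zero, one_mul]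
  · rw [if_neg h.ne']
    have hC : C r col = 0 := by
      cases col with
      | inl k => exact (entry_eq_zero_of_lt C r k.isLt (by simpa using h)).1
      | inr k => exact (entry_eq_zero_of_lt C r k.isLt (by simpa using h)).2
    simp [scaledBC, hC]

lemma mulVec_sum_elim {m : ℕ} (D : Matrix (Fin m) (Fin m ⊕ Fin m) ℂ)
    (u v : Fin m → ℂ) (r : Fin m) :
    D.mulVec (Sum.elim u v) r = ∑ k, (D r (Sum.inl k) * u k + D r (Sum.inr k) * v k) := by
  simp [Matrix.mulVec, dotProduct, Fintype.sum_sum_type, Finset.sum_add_distrib]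

end Stmt16Aux

namespace Stmt16Aux

lemma scaled_dissip {n : ℕ} (C : Matrix (Fin (2*n)) (Fin (2*n) ⊕ Fin (2*n)) ℂ)
    (hdiss : IsDissipativeBC n C) (τ : ℝ) (hτ : 0 < τ) :
    IsDissipativeBC n (scaledBC C ((τ : ℝ) : ℂ)) := by
  intro u v hker
  have hne : ((τ : ℝ) : ℂ) ≠ 0 := by
    simp only [ne_eq, Complex.ofReal_eq_zero]
    exact hτ.ne'
  set t : ℂ := ((τ : ℝ) : ℂ) with ht
  have hC : ∀ r, ∑ k, (C r (Sum.inl k) * (t⁻¹ ^ (k : ℕ) * u k)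
      + C r (Sum.inr k) * (t⁻¹ ^ (k : ℕ) * v k)) = 0 := by
    intro r
    have key : ∀ k : Fin (2*n),
        C r (Sum.inl k) * (t⁻¹ ^ (k : ℕ) * u k) + C r (Sum.inr k) * (t⁻¹ ^ (k : ℕ) * v k)
        = t⁻¹ ^ (rowOrder C r) *
          (scaledBC C t r (Sum.inl k) * u k + scaledBC C t r (Sum.inr k) * v k) := by
      intro k
      rcases le_or_gt (k : ℕ) (rowOrder C r) with h | h
      · have hpow : t⁻¹ ^ (rowOrder C r) * t ^ (rowOrder C r - (k : ℕ)) = t⁻¹ ^ (k : ℕ) := by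
          rw [pow_sub₀ t hne h, inv_pow, inv_pow]
          field_simp
        simp only [scaledBC, Matrix.of_apply, Sum.elim_inl, Sum.elim_inr]
        calc C r (Sum.inl k) * (t⁻¹ ^ (k : ℕ) * u k) + C r (Sum.inr k) * (t⁻¹ ^ (k : ℕ) * v k)
            = (t⁻¹ ^ (rowOrder C r) * t ^ (rowOrder C r - (k : ℕ))) *
              (C r (Sum.inl k) * u k) +
              (t⁻¹ ^ (rowOrder C r) * t ^ (rowOrder C r - (k : ℕ))) *
              (C r (Sum.inr k) * v k) := by rw [hpow]; ring
          _ = _ := by ring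
      · obtain ⟨h1, h2⟩ := entry_eq_zero_of_lt C r k.isLt h
        have h1' : C r (Sum.inl k) = 0 := by
          convert h1 using 3 <;> exact (Fin.eta k k.isLt).symm
        have h2' : C r (Sum.inr k) = 0 := by
          convert h2 using 3 <;> exact (Fin.eta k k.isLt).symm
        simp [scaledBC, h1', h2']
    calc ∑ k, (C r (Sum.inl k) * (t⁻¹ ^ (k : ℕ) * u k)
          + C r (Sum.inr k) * (t⁻¹ ^ (k : ℕ) * v k))
        = ∑ k, t⁻¹ ^ (rowOrder C r) *
          (scaledBC C t r (Sum.inl k) * u k + scaledBC C t r (Sum.inr k) * v k) :=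
          Finset.sum_congr rfl fun k _ => key k
      _ = t⁻¹ ^ (rowOrder C r) * ∑ k,
          (scaledBC C t r (Sum.inl k) * u k + scaledBC C t r (Sum.inr k) * v k) :=
          (Finset.mul_sum _ _ _).symm
      _ = 0 := by rw [hker r, mul_zero]
  have hmain := hdiss (fun k => t⁻¹ ^ (k : ℕ) * u k) (fun k => t⁻¹ ^ (k : ℕ) * v k) hC
  have hconj : (starRingEnd ℂ) t⁻¹ = t⁻¹ := by
    rw [ht, ← Complex.ofReal_inv, Complex.conj_ofReal]
  have hq : ∀ w : Fin (2*n) → ℂ,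
      qJ n (fun k => t⁻¹ ^ (k : ℕ) * w k) = t⁻¹ ^ (2*n - 1) * qJ n w := by
    intro w
    have hsum : ∑ p : Fin (2*n), (-1:ℂ)^((p:ℕ)+1) * (t⁻¹ ^ ((p:ℕ)) * w p)
          * (starRingEnd ℂ) (t⁻¹ ^ ((p.rev:ℕ)) * w p.rev)
        = t⁻¹ ^ (2*n-1) * ∑ p : Fin (2*n),
          (-1:ℂ)^((p:ℕ)+1) * w p * (starRingEnd ℂ) (w p.rev) := by
      rw [Finset.mul_sum]
      apply Finset.sum_congr rfl
      intro p _
      have hpr : (p : ℕ) + (p.rev : ℕ) = 2*n - 1 := by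
        rw [Fin.val_rev]
        have := p.isLt
        omega
      simp only [map_mul, map_pow, hconj]
      rw [show t⁻¹ ^ (2*n-1) = t⁻¹ ^ ((p:ℕ)) * t⁻¹ ^ ((p.rev:ℕ)) from by rw [← pow_add, hpr]]
      ring
    unfold qJ
    beta_reduce
    rw [hsum, mul_left_comm]
  rw [hq v, hq u] at hmain
  have h0 : (0:ℂ) ≤ t ^ (2*n-1) := by
    rw [ht, ← Complex.ofReal_pow]
    exact Complex.zero_le_real.mpr (pow_nonneg hτ.le _)
  have h2 : (0:ℂ) ≤ t ^ (2*n-1) * (t⁻¹ ^ (2*n-1) * qJ n v - t⁻¹ ^ (2*n-1) * qJ n u) :=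
    mul_nonneg h0 hmain
  have h3 : t ^ (2*n-1) * (t⁻¹ ^ (2*n-1) * qJ n v - t⁻¹ ^ (2*n-1) * qJ n u)
      = qJ n v - qJ n u := by
    rw [mul_sub, ← mul_assoc, ← mul_assoc, ← mul_pow, mul_inv_cancel₀ hne, one_pow,
      one_mul, one_mul]
  rwa [h3] at h2

end Stmt16Aux

namespace Stmt16Aux
open Matrix

lemma rows_linearIndependent {m : ℕ} (hm : 0 < m) (C : Matrix (Fin m) (Fin m ⊕ Fin m) ℂ)
    (hnorm : IsNormalized C) :
    LinearIndependent ℂ (fun r : Fin m => scaledBC C 0 r) := by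
  rw [Fintype.linearIndependent_iff]
  intro g hg r0
  set k := rowOrder C r0 with hk0
  have hk : k < m := rowOrder_lt hm C r0
  have hval : ∀ col : Fin m ⊕ Fin m, Sum.elim Fin.val Fin.val col = k →
      ∑ s : {r : Fin m // rowOrder C r = k}, g s.1 * C s.1 col = 0 := by
    intro col hcol
    have hev : ∑ r, g r * scaledBC C 0 r col = 0 := by
      have := congrFun hg col
      simpa [Finset.sum_apply] using this
    have step1 : ∑ r, g r * scaledBC C 0 r col
        = ∑ r, if rowOrder C r = k then g r * C r col else 0 := by
      apply Finset.sum_congr rfl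
      intro r _
      rw [scaledBC_zero_apply, hcol]
      by_cases h : k = rowOrder C r
      · rw [if_pos h, if_pos h.symm]
      · rw [if_neg h, if_neg (fun hh => h hh.symm), mul_zero]
    have step2 : ∑ r, (if rowOrder C r = k then g r * C r col else 0)
        = ∑ r ∈ Finset.univ.filter (fun r => rowOrder C r = k), g r * C r col :=
      (Finset.sum_filter _ _).symm
    have step3 : ∑ r ∈ Finset.univ.filter (fun r => rowOrder C r = k), g r * C r col
        = ∑ s : {r : Fin m // rowOrder C r = k}, g s.1 * C s.1 col := by
      apply Finset.sum_subtype
      intro x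
      simp
    rw [← step3, ← step2, ← step1, hev]
  have hzero : ∑ s : {r : Fin m // rowOrder C r = k}, g s.1 • leadingPair C s.1 = 0 := by
    have hfst := hval (Sum.inl ⟨k, hk⟩) rfl
    have hsnd := hval (Sum.inr ⟨k, hk⟩) rfl
    have e1 : (∑ s : {r : Fin m // rowOrder C r = k}, g s.1 • leadingPair C s.1).1 = 0 := by
      rw [Prod.fst_sum]
      rw [show (∑ s : {r : Fin m // rowOrder C r = k}, (g s.1 • leadingPair C s.1).1)
          = ∑ s : {r : Fin m // rowOrder C r = k}, g s.1 * C s.1 (Sum.inl ⟨k, hk⟩) from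
        Finset.sum_congr rfl fun s _ => by
          rw [leadingPair_eq_of C s.2 hk]; simp [smul_eq_mul]]
      exact hfst
    have e2 : (∑ s : {r : Fin m // rowOrder C r = k}, g s.1 • leadingPair C s.1).2 = 0 := by
      rw [Prod.snd_sum]
      rw [show (∑ s : {r : Fin m // rowOrder C r = k}, (g s.1 • leadingPair C s.1).2)
          = ∑ s : {r : Fin m // rowOrder C r = k}, g s.1 * C s.1 (Sum.inr ⟨k, hk⟩) from
        Finset.sum_congr rfl fun s _ => by
          rw [leadingPair_eq_of C s.2 hk]; simp [smul_eq_mul]]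
      exact hsnd
    exact Prod.ext_iff.mpr ⟨e1, e2⟩
  have := Fintype.linearIndependent_iff.mp (hnorm k) (fun s => g s.1) hzero
  exact this ⟨r0, rfl⟩

lemma exists_rightInverse {m : ℕ} (hm : 0 < m) (C : Matrix (Fin m) (Fin m ⊕ Fin m) ℂ)
    (hnorm : IsNormalized C) :
    ∃ R : Matrix (Fin m ⊕ Fin m) (Fin m) ℂ, scaledBC C 0 * R = 1 := by
  set D := scaledBC C 0 with hD
  have hrows := rows_linearIndependent hm C hnorm
  have hker : LinearMap.ker (Matrix.toLin' Dᵀ) = ⊥ := by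
    rw [LinearMap.ker_eq_bot']
    intro g hgv
    have hsum : ∑ r, g r • D r = 0 := by
      funext col
      rw [Finset.sum_apply]
      have := congrFun hgv col
      simp only [Matrix.toLin'_apply, Matrix.mulVec, dotProduct,
        Matrix.transpose_apply] at this
      simpa [mul_comm, Pi.smul_apply, smul_eq_mul] using this
    funext r
    exact Fintype.linearIndependent_iff.mp hrows g hsum r
  obtain ⟨L, hL⟩ := (Matrix.toLin' Dᵀ).exists_leftInverse_of_injective hker
  refine ⟨(LinearMap.toMatrix' L)ᵀ, ?_⟩
  have h1 : LinearMap.toMatrix' L * Dᵀ = 1 := by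
    calc LinearMap.toMatrix' L * Dᵀ
        = LinearMap.toMatrix' L * LinearMap.toMatrix' (Matrix.toLin' Dᵀ) := by
          rw [LinearMap.toMatrix'_toLin']
      _ = LinearMap.toMatrix' (L.comp (Matrix.toLin' Dᵀ)) := (LinearMap.toMatrix'_comp _ _).symm
      _ = 1 := by rw [hL, LinearMap.toMatrix'_id]
  have h2 := congrArg Matrix.transpose h1
  rwa [Matrix.transpose_mul, Matrix.transpose_transpose, Matrix.transpose_one] at h2

end Stmt16Aux

namespace Stmt16Aux
open Matrix Filter

lemma limit_dissip {n : ℕ} (hn : 1 ≤ n) (C : Matrix (Fin (2*n)) (Fin (2*n) ⊕ Fin (2*n)) ℂ)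
    (hnorm : IsNormalized C) (hdiss : IsDissipativeBC n C)
    (a c : Fin (2*n) → ℂ)
    (hker : (scaledBC C 0).mulVec (Sum.elim a c) = 0) :
    0 ≤ qJ n c - qJ n a := by
  have hm : 0 < 2*n := by omega
  obtain ⟨R, hR⟩ := exists_rightInverse hm C hnorm
  set w : Fin (2*n) ⊕ Fin (2*n) → ℂ := Sum.elim a c with hw
  set τ : ℕ → ℝ := fun s => ((s : ℝ) + 1)⁻¹ with hτdef
  have hτpos : ∀ s, 0 < τ s := fun s => by positivity
  have hτ0 : Tendsto τ atTop (nhds 0) := by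
    simpa [hτdef, one_div] using tendsto_one_div_add_atTop_nhds_zero_nat (𝕜 := ℝ)
  have hτC : Tendsto (fun s => ((τ s : ℝ) : ℂ)) atTop (nhds (0 : ℂ)) := by
    have := (Complex.continuous_ofReal.tendsto (0 : ℝ)).comp hτ0
    simpa [Function.comp_def] using this
  set A : ℕ → Matrix (Fin (2*n)) (Fin (2*n) ⊕ Fin (2*n)) ℂ :=
    fun s => scaledBC C ((τ s : ℝ) : ℂ) with hA
  have hAentry : ∀ r col, Tendsto (fun s => A s r col) atTop
      (nhds (scaledBC C 0 r col)) := by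
    intro r col
    have h : Tendsto
        (fun s => ((τ s : ℝ) : ℂ) ^ (rowOrder C r - Sum.elim Fin.val Fin.val col) * C r col)
        atTop
        (nhds ((0:ℂ) ^ (rowOrder C r - Sum.elim Fin.val Fin.val col) * C r col)) :=
      (hτC.pow _).mul_const _
    exact h
  have hAt : Tendsto A atTop (nhds (scaledBC C 0)) := by
    exact tendsto_pi_nhds.mpr fun r => tendsto_pi_nhds.mpr fun col => hAentry r col
  set M : ℕ → Matrix (Fin (2*n)) (Fin (2*n)) ℂ := fun s => A s * R with hM
  have hMt : Tendsto M atTop (nhds 1) := by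
    have hcont : Continuous fun X : Matrix (Fin (2*n)) (Fin (2*n) ⊕ Fin (2*n)) ℂ => X * R :=
      continuous_id.matrix_mul continuous_const
    have h := (hcont.tendsto (scaledBC C 0)).comp hAt
    rw [hR] at h
    exact h
  have hdet : Tendsto (fun s => (M s).det) atTop (nhds 1) := by
    have hcont : Continuous fun X : Matrix (Fin (2*n)) (Fin (2*n)) ℂ => X.det :=
      continuous_id.matrix_det
    have h := (hcont.tendsto 1).comp hMt
    simpa [Matrix.det_one, Function.comp_def] using h
  have hadj : Tendsto (fun s => (M s).adjugate) atTop
      (nhds (1 : Matrix (Fin (2*n)) (Fin (2*n)) ℂ)) := by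
    have hcont : Continuous fun X : Matrix (Fin (2*n)) (Fin (2*n)) ℂ => X.adjugate :=
      continuous_id.matrix_adjugate
    have h := (hcont.tendsto 1).comp hMt
    simpa [Matrix.adjugate_one, Function.comp_def] using h
  have hMinv : ∀ r r', Tendsto (fun s => (M s)⁻¹ r r') atTop
      (nhds ((1 : Matrix (Fin (2*n)) (Fin (2*n)) ℂ) r r')) := by
    intro r r'
    have h1 : ∀ s, (M s)⁻¹ r r' = (M s).det⁻¹ * (M s).adjugate r r' := by
      intro s
      rw [Matrix.inv_def, Ring.inverse_eq_inv, Matrix.smul_apply, smul_eq_mul]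
    have hadjrr : Tendsto (fun s => (M s).adjugate r r') atTop
        (nhds ((1 : Matrix (Fin (2*n)) (Fin (2*n)) ℂ) r r')) :=
      tendsto_pi_nhds.mp (tendsto_pi_nhds.mp hadj r) r'
    have h2 := (hdet.inv₀ one_ne_zero).mul hadjrr
    rw [inv_one, one_mul] at h2
    exact Tendsto.congr (fun s => (h1 s).symm) h2
  have hq0 : ∀ r', Tendsto (fun s => (A s).mulVec w r') atTop (nhds 0) := by
    intro r'
    have hterm : Tendsto (fun s => ∑ col, A s r' col * w col) atTop
        (nhds (∑ col, scaledBC C 0 r' col * w col)) :=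
      tendsto_finset_sum _ (fun col _ => (hAentry r' col).mul_const _)
    have hz : (∑ col, scaledBC C 0 r' col * w col) = 0 := by
      have := congrFun hker r'
      simpa [Matrix.mulVec, dotProduct] using this
    rw [hz] at hterm
    have hrepr : ∀ s, (A s).mulVec w r' = ∑ col, A s r' col * w col := by
      intro s; simp [Matrix.mulVec, dotProduct]
    exact Tendsto.congr (fun s => (hrepr s).symm) hterm
  set x : ℕ → (Fin (2*n) ⊕ Fin (2*n)) → ℂ :=
    fun s => w - R.mulVec ((M s)⁻¹.mulVec ((A s).mulVec w)) with hx
  have hy0 : ∀ r, Tendsto (fun s => (M s)⁻¹.mulVec ((A s).mulVec w) r) atTop (nhds 0) := by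
    intro r
    have h := tendsto_finset_sum (Finset.univ : Finset (Fin (2*n)))
      (fun r' _ => (hMinv r r').mul (hq0 r'))
    have hz : ∑ r' : Fin (2*n), (1 : Matrix (Fin (2*n)) (Fin (2*n)) ℂ) r r' * 0 = 0 := by simp
    rw [hz] at h
    have hrepr : ∀ s, (M s)⁻¹.mulVec ((A s).mulVec w) r
        = ∑ r', (M s)⁻¹ r r' * (A s).mulVec w r' := by
      intro s; simp [Matrix.mulVec, dotProduct]
    exact Tendsto.congr (fun s => (hrepr s).symm) h
  have hxcol : ∀ col, Tendsto (fun s => x s col) atTop (nhds (w col)) := by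
    intro col
    have h := Tendsto.sub (tendsto_const_nhds : Tendsto (fun _ : ℕ => w col) atTop (nhds (w col)))
      (tendsto_finset_sum (Finset.univ : Finset (Fin (2*n)))
        (fun r _ => (tendsto_const_nhds : Tendsto (fun _ : ℕ => R col r) atTop _).mul (hy0 r)))
    have hz : w col - ∑ r : Fin (2*n), R col r * 0 = w col := by simp
    rw [hz] at h
    have hrepr : ∀ s, x s col
        = w col - ∑ r, R col r * ((M s)⁻¹.mulVec ((A s).mulVec w) r) := by
      intro s
      rfl
    exact Tendsto.congr (fun s => (hrepr s).symm) h
  have hkerx : ∀ᶠ s in atTop, (A s).mulVec (x s) = 0 := by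
    filter_upwards [hdet.eventually_ne one_ne_zero] with s hs
    have hunit : IsUnit (M s).det := isUnit_iff_ne_zero.mpr hs
    have hsplit : (A s).mulVec (x s) = (A s).mulVec w
        - (A s).mulVec (R.mulVec ((M s)⁻¹.mulVec ((A s).mulVec w))) := by
      rw [hx]
      exact Matrix.mulVec_sub _ _ _
    have hARw : (A s).mulVec (R.mulVec ((M s)⁻¹.mulVec ((A s).mulVec w)))
        = (A s).mulVec w := by
      calc (A s).mulVec (R.mulVec ((M s)⁻¹.mulVec ((A s).mulVec w)))
          = (A s * R).mulVec ((M s)⁻¹.mulVec ((A s).mulVec w)) :=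
            Matrix.mulVec_mulVec _ _ _
        _ = (M s).mulVec ((M s)⁻¹.mulVec ((A s).mulVec w)) := rfl
        _ = (M s * (M s)⁻¹).mulVec ((A s).mulVec w) := Matrix.mulVec_mulVec _ _ _
        _ = (1 : Matrix (Fin (2*n)) (Fin (2*n)) ℂ).mulVec ((A s).mulVec w) := by
            rw [Matrix.mul_nonsing_inv _ hunit]
        _ = (A s).mulVec w := Matrix.one_mulVec _
    rw [hsplit, hARw, sub_self]
  have hQev : ∀ᶠ s in atTop,
      0 ≤ qJ n (fun k => x s (Sum.inr k)) - qJ n (fun k => x s (Sum.inl k)) := by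
    filter_upwards [hkerx] with s hs
    apply scaled_dissip C hdiss (τ s) (hτpos s)
    intro r
    have helim : Sum.elim (fun k => x s (Sum.inl k)) (fun k => x s (Sum.inr k)) = x s := by
      funext col; cases col <;> rfl
    rw [← mulVec_sum_elim, helim]
    rw [show (scaledBC C ((τ s : ℝ) : ℂ)) = A s from rfl, hs]
    rfl
  have hQt : Tendsto (fun s => qJ n (fun k => x s (Sum.inr k)) - qJ n (fun k => x s (Sum.inl k)))
      atTop (nhds (qJ n c - qJ n a)) := by
    have hqJ : ∀ (f : Fin (2*n) → (Fin (2*n) ⊕ Fin (2*n))),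
        Tendsto (fun s => qJ n (fun k => x s (f k))) atTop (nhds (qJ n (fun k => w (f k)))) := by
      intro f
      unfold qJ
      apply Filter.Tendsto.const_mul
      apply tendsto_finset_sum
      intro p _
      exact (tendsto_const_nhds.mul (hxcol (f p))).mul
        ((RCLike.continuous_conj.tendsto _).comp (hxcol (f p.rev)))
    have h1 := (hqJ Sum.inr).sub (hqJ Sum.inl)
    have e1 : (fun k => w (Sum.inr k)) = c := by funext k; simp [hw]
    have e2 : (fun k => w (Sum.inl k)) = a := by funext k; simp [hw]
    rw [e1, e2] at h1
    exact h1
  have hre : 0 ≤ (qJ n c - qJ n a).re := by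
    apply ge_of_tendsto ((Complex.continuous_re.tendsto _).comp hQt)
    filter_upwards [hQev] with s hs
    simpa using (Complex.le_def.mp hs).1
  have him : (qJ n c - qJ n a).im = 0 := by
    have h2 := (Complex.continuous_im.tendsto _).comp hQt
    have heq : (fun s => (qJ n (fun k => x s (Sum.inr k))
        - qJ n (fun k => x s (Sum.inl k))).im) =ᶠ[atTop] fun _ => (0:ℝ) := by
      filter_upwards [hQev] with s hs
      simpa using ((Complex.le_def.mp hs).2).symm
    exact tendsto_nhds_unique h2 (Filter.Tendsto.congr' heq.symm tendsto_const_nhds)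
  rw [Complex.le_def]
  constructor
  · simpa using hre
  · simp [him]

end Stmt16Aux

open Stmt16Aux

/-- for a normalized dissipative rank-`2n` system, if exactly one row
has order `j` and exactly one row has order `2n−1−j`, with leading pairs `(b₀, b₁)` and
`(c₀, c₁)` respectively, then `b₀·conj(c₀) = b₁·conj(c₁)`. -/
theorem stmt16 (n : ℕ) (hn : 1 ≤ n)
    (C : Matrix (Fin (2 * n)) (Fin (2 * n) ⊕ Fin (2 * n)) ℂ)
    (hrank : C.rank = 2 * n) (hnorm : IsNormalized C) (hdiss : IsDissipativeBC n C)
    (j : ℕ) (hj : j < 2 * n)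
    (h1 : (Finset.univ.filter fun row : Fin (2 * n) => rowOrder C row = j).card = 1)
    (h2 : (Finset.univ.filter fun row : Fin (2 * n) =>
      rowOrder C row = 2 * n - 1 - j).card = 1)
    (rowb rowc : Fin (2 * n))
    (hb : rowOrder C rowb = j) (hc : rowOrder C rowc = 2 * n - 1 - j) :
    (leadingPair C rowb).1 * (starRingEnd ℂ) ((leadingPair C rowc).1)
      = (leadingPair C rowb).2 * (starRingEnd ℂ) ((leadingPair C rowc).2) := by
  classical
  have hm : 0 < 2 * n := by omega
  set k2 := 2 * n - 1 - j with hk2def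
  have hk2 : k2 < 2 * n := by omega
  have hjk2 : j ≠ k2 := by omega
  set P1 : Fin (2 * n) := ⟨j, hj⟩ with hP1def
  set P2 : Fin (2 * n) := ⟨k2, hk2⟩ with hP2def
  have hP12 : P1 ≠ P2 := fun h => hjk2 (by simpa [hP1def, hP2def, Fin.ext_iff] using h)
  have hrevP1 : P1.rev = P2 := by
    apply Fin.ext
    rw [Fin.val_rev]
    show 2 * n - (j + 1) = k2
    omega
  have hrevP2 : P2.rev = P1 := by rw [← hrevP1, Fin.rev_rev]
  have hlpb : leadingPair C rowb = (C rowb (Sum.inl P1), C rowb (Sum.inr P1)) :=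
    leadingPair_eq_of C hb hj
  have hlpc : leadingPair C rowc = (C rowc (Sum.inl P2), C rowc (Sum.inr P2)) :=
    leadingPair_eq_of C hc hk2
  rw [hlpb, hlpc]
  set b0 := C rowb (Sum.inl P1) with hb0
  set b1 := C rowb (Sum.inr P1) with hb1
  set c0 := C rowc (Sum.inl P2) with hc0
  set c1 := C rowc (Sum.inr P2) with hc1
  show b0 * (starRingEnd ℂ) c0 = b1 * (starRingEnd ℂ) c1
  -- the two-point vectors
  set F : ℂ → ℂ → Fin (2 * n) → ℂ :=
    fun x1 x2 => fun p => if p = P1 then x1 else if p = P2 then x2 else 0 with hF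
  -- kernel membership
  have hkerF : ∀ x1 x2 y1 y2 : ℂ, b0 * x1 + b1 * y1 = 0 → c0 * x2 + c1 * y2 = 0 →
      (scaledBC C 0).mulVec (Sum.elim (F x1 x2) (F y1 y2)) = 0 := by
    intro x1 x2 y1 y2 hbc hcc
    funext r
    rw [mulVec_sum_elim]
    have hord : rowOrder C r < 2 * n := rowOrder_lt hm C r
    set kr : Fin (2 * n) := ⟨rowOrder C r, hord⟩ with hkrdef
    have hstep : ∀ k : Fin (2 * n),
        scaledBC C 0 r (Sum.inl k) * F x1 x2 k + scaledBC C 0 r (Sum.inr k) * F y1 y2 k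
        = if k = kr then C r (Sum.inl k) * F x1 x2 k + C r (Sum.inr k) * F y1 y2 k else 0 := by
      intro k
      rw [scaledBC_zero_apply, scaledBC_zero_apply]
      simp only [Sum.elim_inl, Sum.elim_inr]
      by_cases h : k = kr
      · have hv : (k : ℕ) = rowOrder C r := by subst h; rfl
        rw [if_pos h]
        exact congrArg₂ (· + ·) (congrArg (· * F x1 x2 k) (if_pos hv)) (congrArg (· * F y1 y2 k) (if_pos hv))
      · have hne : ¬((k : ℕ) = rowOrder C r) := fun hh => h (Fin.ext hh)
        rw [if_neg h]
        exact (congrArg₂ (· + ·) (congrArg (· * F x1 x2 k) (if_neg hne)) (congrArg (· * F y1 y2 k) (if_neg hne))).trans (by simp)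
    rw [Finset.sum_congr rfl (fun k _ => hstep k), Finset.sum_ite_eq' Finset.univ kr _,
      if_pos (Finset.mem_univ _)]
    show C r (Sum.inl kr) * F x1 x2 kr + C r (Sum.inr kr) * F y1 y2 kr = 0
    by_cases hordj : rowOrder C r = j
    · have hr : r = rowb := row_eq_of_card_one h1 hordj hb
      have hkr : kr = P1 := Fin.ext (by simpa [hkrdef] using hordj)
      subst hr
      rw [hkr]
      have e1 : F x1 x2 P1 = x1 := if_pos rfl
      have e2 : F y1 y2 P1 = y1 := if_pos rfl
      rw [e1, e2, ← hb0, ← hb1]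
      exact hbc
    · by_cases hordk2 : rowOrder C r = k2
      · have hr : r = rowc := row_eq_of_card_one h2 hordk2 hc
        have hkr : kr = P2 := Fin.ext (by simpa [hkrdef] using hordk2)
        subst hr
        rw [hkr]
        have e1 : F x1 x2 P2 = x2 := by
          rw [hF]; beta_reduce
          rw [if_neg (Ne.symm hP12), if_pos rfl]
        have e2 : F y1 y2 P2 = y2 := by
          rw [hF]; beta_reduce
          rw [if_neg (Ne.symm hP12), if_pos rfl]
        rw [e1, e2, ← hc0, ← hc1]
        exact hcc
      · have hkr1 : kr ≠ P1 := fun h => hordj (by simpa [hkrdef, Fin.ext_iff] using h)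
        have hkr2 : kr ≠ P2 := fun h => hordk2 (by simpa [hkrdef, Fin.ext_iff] using h)
        have e1 : F x1 x2 kr = 0 := by
          rw [hF]; beta_reduce
          rw [if_neg hkr1, if_neg hkr2]
        have e2 : F y1 y2 kr = 0 := by
          rw [hF]; beta_reduce
          rw [if_neg hkr1, if_neg hkr2]
        rw [e1, e2, mul_zero, mul_zero, add_zero]
  -- the value of qJ on such vectors
  have Eform : ∀ x1 x2 : ℂ, qJ n (F x1 x2)
      = Complex.I * (-1 : ℂ) ^ (n + 1) *
        ((-1 : ℂ) ^ (j + 1) * x1 * (starRingEnd ℂ) x2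
          + (-1 : ℂ) ^ (k2 + 1) * x2 * (starRingEnd ℂ) x1) := by
    intro x1 x2
    unfold qJ
    congr 1
    have hvanish : ∀ p ∈ Finset.univ, p ∉ ({P1, P2} : Finset (Fin (2 * n))) →
        (-1 : ℂ) ^ ((p : ℕ) + 1) * F x1 x2 p * (starRingEnd ℂ) (F x1 x2 p.rev) = 0 := by
      intro p _ hp
      simp only [Finset.mem_insert, Finset.mem_singleton, not_or] at hp
      have : F x1 x2 p = 0 := by
        rw [hF]; beta_reduce
        rw [if_neg hp.1, if_neg hp.2]
      rw [this, mul_zero, zero_mul]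
    rw [← Finset.sum_subset (Finset.subset_univ ({P1, P2} : Finset (Fin (2 * n)))) hvanish,
      Finset.sum_pair hP12]
    have eP1 : F x1 x2 P1 = x1 := if_pos rfl
    have eP2 : F x1 x2 P2 = x2 := by
      rw [hF]; beta_reduce
      rw [if_neg (Ne.symm hP12), if_pos rfl]
    rw [hrevP1, hrevP2, eP1, eP2]
  -- sign relation
  have hsign : (-1 : ℂ) ^ (k2 + 1) = -(-1 : ℂ) ^ (j + 1) := by
    have hprod : (-1 : ℂ) ^ (j + 1) * (-1 : ℂ) ^ (k2 + 1) = -1 := by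
      rw [← pow_add, show j + 1 + (k2 + 1) = 2 * n + 1 by omega, pow_succ, pow_mul]
      norm_num
    have hsq : (-1 : ℂ) ^ (j + 1) * (-1 : ℂ) ^ (j + 1) = 1 := by
      rw [← pow_add, show j + 1 + (j + 1) = 2 * (j + 1) by ring, pow_mul]
      norm_num
    calc (-1 : ℂ) ^ (k2 + 1)
        = ((-1 : ℂ) ^ (j + 1) * (-1 : ℂ) ^ (j + 1)) * (-1 : ℂ) ^ (k2 + 1) := by
          rw [hsq, one_mul]
      _ = (-1 : ℂ) ^ (j + 1) * ((-1 : ℂ) ^ (j + 1) * (-1 : ℂ) ^ (k2 + 1)) := by ring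
      _ = -(-1 : ℂ) ^ (j + 1) := by rw [hprod]; ring
  set d : ℂ := b0 * (starRingEnd ℂ) c0 - b1 * (starRingEnd ℂ) c1 with hd
  -- the identity for the dissipation difference
  have Eid : ∀ z : ℂ, qJ n (F (-(z * b0)) (-c0)) - qJ n (F (z * b1) c1)
      = Complex.I * (-1 : ℂ) ^ (n + 1) * (-1 : ℂ) ^ (j + 1)
        * ((z * d) - (starRingEnd ℂ) (z * d)) := by
    intro z
    rw [Eform, Eform, hsign, hd]
    simp only [map_mul, map_neg, map_sub, Complex.conj_conj]
    ring
  -- nonnegativity from the limit lemma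
  have key : ∀ z : ℂ, 0 ≤ qJ n (F (-(z * b0)) (-c0)) - qJ n (F (z * b1) c1) := by
    intro z
    apply limit_dissip hn C hnorm hdiss
    apply hkerF
    · ring
    · ring
  -- the difference vanishes identically
  have hzero : ∀ z : ℂ, qJ n (F (-(z * b0)) (-c0)) - qJ n (F (z * b1) c1) = 0 := by
    intro z
    have hpos := key z
    have hneg := key (-z)
    have hrel : qJ n (F (-(-z * b0)) (-c0)) - qJ n (F (-z * b1) c1)
        = -(qJ n (F (-(z * b0)) (-c0)) - qJ n (F (z * b1) c1)) := by
      rw [Eid, Eid]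
      simp only [map_mul, map_neg, map_sub, Complex.conj_conj]
      ring
    rw [hrel] at hneg
    have hle : qJ n (F (-(z * b0)) (-c0)) - qJ n (F (z * b1) c1) ≤ 0 := neg_nonneg.mp hneg
    exact le_antisymm hle hpos
  -- specialize
  set z0 : ℂ := Complex.I * (starRingEnd ℂ) d with hz0
  have hE := hzero z0
  rw [Eid] at hE
  have hfac : z0 * d - (starRingEnd ℂ) (z0 * d) = 0 := by
    rcases mul_eq_zero.mp hE with h | h
    · exfalso
      rcases mul_eq_zero.mp h with h' | h'
      · rcases mul_eq_zero.mp h' with h'' | h''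
        · exact Complex.I_ne_zero h''
        · exact pow_ne_zero _ (by norm_num : (-1 : ℂ) ≠ 0) h''
      · exact pow_ne_zero _ (by norm_num : (-1 : ℂ) ≠ 0) h'
    · exact h
  have hz0d : z0 * d = Complex.I * ((Complex.normSq d : ℝ) : ℂ) := by
    rw [hz0, mul_assoc, mul_comm ((starRingEnd ℂ) d) d, Complex.mul_conj]
  rw [hz0d, map_mul, Complex.conj_I, Complex.conj_ofReal] at hfac
  have h2IN : (2 * Complex.I) * ((Complex.normSq d : ℝ) : ℂ) = 0 := by
    linear_combination hfac
  have hN : ((Complex.normSq d : ℝ) : ℂ) = 0 := by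
    rcases mul_eq_zero.mp h2IN with h | h
    · exact absurd h (mul_ne_zero two_ne_zero Complex.I_ne_zero)
    · exact h
  have hd0 : d = 0 := by
    have := Complex.ofReal_eq_zero.mp hN
    exact Complex.normSq_eq_zero.mp this
  have := sub_eq_zero.mp (hd ▸ hd0)
  exact this
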